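/- arXiv:1910.02446 — 8 statements merged into one kernel-verified Lean document; each statement's English description precedes it below -/
import Mathlib

section
/- Let F be the class consisting of the single frame ({w,u}, ∅) with empty accessibility relation. Then F is not closed under point-generated subframes, yet for all modal formulas Γ ∪ {φ}, φ is a global consequence of Γ with respect to F if and only if φ is a local consequence of □^ωΓ with respect to F. -/
/-- Formulas of the basic modal language. -/
inductive Form : Type where
  | var : ℕ → Form
  | bot : Form
  | imp : Form → Form → Form
  | box : Form → Form

def Form.neg (φ : Form) : Form := .imp φ .bot
def Form.dia (φ : Form) : Form := .neg (.box (.neg φ))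
def Form.or (φ ψ : Form) : Form := .imp (.neg φ) ψ
def Form.and (φ ψ : Form) : Form := .neg (.imp φ (.neg ψ))

/-- A Kripke frame: a nonempty set of worlds with an accessibility relation. -/
structure Frame : Type 1 where
  W : Type
  R : W → W → Prop
  nonempty : Nonempty W

/-- Truth at a world of a model. -/
def Frame.sat (F : Frame) (V : ℕ → F.W → Prop) : F.W → Form → Prop
  | w, .var n => V n w
  | _, .bot => False
  | w, .imp φ ψ => F.sat V w φ → F.sat V w ψ
  | w, .box φ => ∀ u, F.R w u → F.sat V u φ

/-- Local consequence with respect to a class of frames. -/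
def localConseq (C : Frame → Prop) (Γ : Set Form) (φ : Form) : Prop :=
  ∀ F, C F → ∀ V : ℕ → F.W → Prop, ∀ w : F.W,
    (∀ ψ ∈ Γ, F.sat V w ψ) → F.sat V w φ

/-- Global consequence with respect to a class of frames. -/
def globalConseq (C : Frame → Prop) (Γ : Set Form) (φ : Form) : Prop :=
  ∀ F, C F → ∀ V : ℕ → F.W → Prop,
    (∀ ψ ∈ Γ, ∀ w : F.W, F.sat V w ψ) → ∀ w : F.W, F.sat V w φ

/-- □ⁿφ -/
def boxIter : ℕ → Form → Form
  | 0, φ => φ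
  | n+1, φ => .box (boxIter n φ)

/-- ◇ⁿφ -/
def diaIter : ℕ → Form → Form
  | 0, φ => φ
  | n+1, φ => .dia (diaIter n φ)

/-- □^ωΓ = {□ⁿψ | n ∈ ℕ, ψ ∈ Γ} -/
def boxOmega (Γ : Set Form) : Set Form :=
  {χ | ∃ n ψ, ψ ∈ Γ ∧ χ = boxIter n ψ}

/-- The subframe of `F` generated by the point `w`. -/
def Frame.gen (F : Frame) (w : F.W) : Frame where
  W := {v : F.W // Relation.ReflTransGen F.R w v}
  R a b := F.R a.1 b.1
  nonempty := ⟨⟨w, Relation.ReflTransGen.refl⟩⟩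

/-- A class of frames is closed under point-generated subframes. -/
def closedGen (C : Frame → Prop) : Prop :=
  ∀ F, C F → ∀ w : F.W, C (F.gen w)

/-- Modal-free (purely propositional) formulas. -/
def modalFree : Form → Prop
  | .var _ => True
  | .bot => True
  | .imp φ ψ => modalFree φ ∧ modalFree ψ
  | .box _ => False

/-- The frame ({w,u}, ∅), with empty accessibility relation. -/
def F₁ : Frame where
  W := Bool
  R _ _ := False
  nonempty := ⟨true⟩

lemma const_sat (V : ℕ → F₁.W → Prop) (w : F₁.W) (ψ : Form) (v : F₁.W) :
    F₁.sat (fun n _ => V n w) v ψ ↔ F₁.sat V w ψ := by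
  induction ψ generalizing v with
  | var n => simp [Frame.sat]
  | bot => simp [Frame.sat]
  | imp φ ψ ihφ ihψ => simp [Frame.sat, ihφ, ihψ]
  | box φ ih =>
    constructor <;> intro _ u hu <;> exact absurd hu (by exact id)

/-- a class of frames not closed under point-generated subframes
for which global consequence nevertheless equals local consequence from □^ωΓ. -/
theorem stmt5 :
    ¬ closedGen (· = F₁) ∧
    ∀ (Γ : Set Form) (φ : Form),
      globalConseq (· = F₁) Γ φ ↔ localConseq (· = F₁) (boxOmega Γ) φ := by
  constructor
  · intro h
    have h1 : F₁.gen true = F₁ := h F₁ rfl true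
    have hsub : Subsingleton (F₁.gen true).W := by
      constructor
      rintro ⟨a, ha⟩ ⟨b, hb⟩
      have key : ∀ x : F₁.W, Relation.ReflTransGen F₁.R true x → x = true := by
        intro x hx
        induction hx with
        | refl => rfl
        | tail _ h _ => exact absurd h (by exact id)
      have := key a ha
      have := key b hb
      subst this; subst ‹a = true›; rfl
    rw [h1] at hsub
    exact absurd (hsub.elim true false) (by simp [F₁])
  · intro Γ φ
    constructor
    · intro hg F hF V w hΓ
      subst hF
      have hglob : ∀ ψ ∈ Γ, ∀ v : F₁.W, F₁.sat (fun n _ => V n w) v ψ := by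
        intro ψ hψ v
        rw [const_sat]
        exact hΓ ψ ⟨0, ψ, hψ, rfl⟩
      have := hg F₁ rfl (fun n _ => V n w) hglob w
      rwa [const_sat] at this
    · intro hl F hF V hΓ w
      subst hF
      apply hl F₁ rfl V w
      rintro χ ⟨n, ψ, hψ, rfl⟩
      cases n with
      | zero => exact hΓ ψ hψ w
      | succ m => intro u hu; exact absurd hu (by exact id)
end

section
/- Let F be a class of transitive Kripke frames closed under point-generated subframes and under irreflexive point extension. Then for any modal formulas Γ ∪ {φ}: Γ ⊨^g_F φ if and only if □Γ ⊨_F □φ. -/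
/-- Irreflexive point extension of `F` at `w` by a fresh point (`none`). -/
def Frame.ptext (F : Frame) (w : F.W) : Frame where
  W := Option F.W
  R a b := match a, b with
    | some x, some y => F.R x y
    | none, some y => y = w ∨ F.R w y
    | _, none => False
  nonempty := ⟨none⟩

/-- A class of frames is closed under irreflexive point extension. -/
def closedPtext (C : Frame → Prop) : Prop :=
  ∀ F, C F → ∀ w : F.W, ¬ F.R w w → C (F.ptext w)

lemma gen_sat (F : Frame) (u : F.W) (V : ℕ → F.W → Prop) :
    ∀ φ (v : (F.gen u).W), (F.gen u).sat (fun n a => V n a.1) v φ ↔ F.sat V v.1 φ := by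
  intro φ
  induction φ with
  | var n => intro v; rfl
  | bot => intro v; rfl
  | imp φ ψ ihφ ihψ =>
    intro v
    constructor
    · intro h hφ; exact (ihψ v).mp (h ((ihφ v).mpr hφ))
    · intro h hφ; exact (ihψ v).mpr (h ((ihφ v).mp hφ))
  | box φ ih =>
    intro v
    constructor
    · intro h y hy
      exact (ih ⟨y, v.2.tail hy⟩).mp (h ⟨y, v.2.tail hy⟩ hy)
    · intro h y hy
      exact (ih y).mpr (h y.1 hy)

lemma ptext_sat (F : Frame) (w : F.W) (V : ℕ → F.W → Prop) :
    ∀ φ (x : F.W),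
      (F.ptext w).sat (fun n a => a.elim True (V n)) (some x) φ ↔ F.sat V x φ := by
  intro φ
  induction φ with
  | var n => intro x; rfl
  | bot => intro x; rfl
  | imp φ ψ ihφ ihψ =>
    intro x
    constructor
    · intro h hφ; exact (ihψ x).mp (h ((ihφ x).mpr hφ))
    · intro h hφ; exact (ihψ x).mpr (h ((ihφ x).mp hφ))
  | box φ ih =>
    intro x
    constructor
    · intro h y hy
      exact (ih y).mp (h (some y) hy)
    · intro h y hy
      match y with
      | some z => exact (ih z).mpr (h z hy)
      | none => exact hy.elim

/-- for classes of transitive frames closed under point-generated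
subframes and irreflexive point extension, Γ ⊨^g_F φ iff □Γ ⊨_F □φ. -/
theorem stmt7 (C : Frame → Prop)
    (htrans : ∀ F, C F → Transitive F.R)
    (hgen : closedGen C) (hext : closedPtext C)
    (Γ : Set Form) (φ : Form) :
    globalConseq C Γ φ ↔ localConseq C (Form.box '' Γ) (.box φ) := by
  constructor
  · intro hg F hF V w hΓ u hwu
    have hG := hgen F hF u
    have key : ∀ ψ ∈ Γ, ∀ v : (F.gen u).W, (F.gen u).sat (fun n a => V n a.1) v ψ := by
      intro ψ hψ v
      rw [gen_sat]
      have hwv : F.R w v.1 := by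
        have : ∀ x, Relation.ReflTransGen F.R u x → F.R w x := by
          intro x hx
          induction hx with
          | refl => exact hwu
          | tail _ h2 ih => exact htrans F hF ih h2
        exact this v.1 v.2
      exact hΓ (.box ψ) ⟨ψ, hψ, rfl⟩ v.1 hwv
    have := hg (F.gen u) hG (fun n a => V n a.1) key ⟨u, Relation.ReflTransGen.refl⟩
    exact (gen_sat F u V φ ⟨u, Relation.ReflTransGen.refl⟩).mp this
  · intro hl F hF V hΓ w
    by_cases hRww : F.R w w
    · have h := hl F hF V w (by
        rintro ψ ⟨χ, hχ, rfl⟩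
        intro y hy
        exact hΓ χ hχ y)
      exact h w hRww
    · have hF' := hext F hF w hRww
      have h := hl (F.ptext w) hF' (fun n a => a.elim True (V n)) none (by
        rintro ψ ⟨χ, hχ, rfl⟩
        intro y hy
        match y with
        | some z => exact (ptext_sat F w V χ z).mpr (hΓ χ hχ z)
        | none => exact hy.elim)
      have := h (some w) (Or.inl rfl)
      exact (ptext_sat F w V φ w).mp this
end

section
/- For any modal formulas Γ ∪ {φ}, the following are equivalent: (1) Γ is globally ⊨-related to φ over the class S5 of frames with equivalence relations (Γ ⊨^g_{S5} φ); (2) □Γ ⊨_{S5} □φ; (3) □Γ ⊨_{S5} φ; (4) □Γ ⊨_{K45} □φ, where K45 is the class of transitive Euclidean frames; (5) □Γ ⊨_{KD45} □φ, where KD45 is the class of serial transitive Euclidean frames. -/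
/-- The class of S5 frames: equivalence relations. -/
def S5 : Frame → Prop := fun F => Equivalence F.R

/-- The class of K45 frames: transitive Euclidean relations. -/
def K45 : Frame → Prop := fun F =>
  Transitive F.R ∧ ∀ x y z : F.W, F.R x y → F.R x z → F.R y z

/-- The class of KD45 frames: serial transitive Euclidean relations. -/
def KD45 : Frame → Prop := fun F =>
  (∀ x : F.W, ∃ y, F.R x y) ∧ Transitive F.R ∧
    ∀ x y z : F.W, F.R x y → F.R x z → F.R y z

def Frame.restr (F : Frame) (S : Set F.W) (h : S.Nonempty) : Frame where
  W := S
  R a b := F.R a.1 b.1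
  nonempty := h.to_subtype

lemma sat_restr (F : Frame) (S : Set F.W) (h : S.Nonempty)
    (closed : ∀ ⦃a b : F.W⦄, a ∈ S → F.R a b → b ∈ S) (V : ℕ → F.W → Prop) :
    ∀ (χ : Form) (a : (F.restr S h).W),
      (F.restr S h).sat (fun n a => V n a.1) a χ ↔ F.sat V a.1 χ := by
  intro χ
  induction χ with
  | var n => intro a; exact Iff.rfl
  | bot => intro a; exact Iff.rfl
  | imp χ1 χ2 ih1 ih2 =>
    intro a
    constructor
    · intro hh h1; exact (ih2 a).mp (hh ((ih1 a).mpr h1))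
    · intro hh h1; exact (ih2 a).mpr (hh ((ih1 a).mp h1))
  | box χ ih =>
    intro a
    constructor
    · intro hb u hu
      exact (ih ⟨u, closed a.2 hu⟩).mp (hb ⟨u, closed a.2 hu⟩ hu)
    · intro hb b hb'
      exact (ih b).mpr (hb b.1 hb')

lemma mem_boxΓ {Γ : Set Form} {ψ : Form} (hψ : ψ ∈ Γ) :
    Form.box ψ ∈ Form.box '' Γ := ⟨ψ, hψ, rfl⟩

/-- equivalent characterizations of global S5 consequence. -/
theorem stmt9 (Γ : Set Form) (φ : Form) :
    (globalConseq S5 Γ φ ↔ localConseq S5 (Form.box '' Γ) (.box φ)) ∧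
    (localConseq S5 (Form.box '' Γ) (.box φ) ↔ localConseq S5 (Form.box '' Γ) φ) ∧
    (localConseq S5 (Form.box '' Γ) φ ↔ localConseq K45 (Form.box '' Γ) (.box φ)) ∧
    (localConseq K45 (Form.box '' Γ) (.box φ) ↔
      localConseq KD45 (Form.box '' Γ) (.box φ)) := by
  refine ⟨⟨?_, ?_⟩, ⟨?_, ?_⟩, ⟨?_, ?_⟩, ⟨?_, ?_⟩⟩
  -- (1) → (2)
  · intro h F hF V w hp u hu
    have hne : ({v | F.R w v} : Set F.W).Nonempty := ⟨w, hF.refl w⟩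
    have closed : ∀ ⦃a b : F.W⦄, a ∈ {v | F.R w v} → F.R a b → b ∈ {v | F.R w v} :=
      fun a b ha hab => hF.trans ha hab
    set G := F.restr {v | F.R w v} hne with hG
    have hG5 : S5 G :=
      ⟨fun a => hF.refl a.1, fun hab => hF.symm hab, fun hab hbc => hF.trans hab hbc⟩
    have hconc := h G hG5 (fun n a => V n a.1) ?_ ⟨u, hu⟩
    · exact (sat_restr F _ hne closed V φ ⟨u, hu⟩).mp hconc
    · intro ψ hψ a
      exact (sat_restr F _ hne closed V ψ a).mpr (hp (Form.box ψ) (mem_boxΓ hψ) a.1 a.2)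
  -- (2) → (1)
  · intro h F hF V hΓ w
    have := h F hF V w ?_
    · exact this w (hF.refl w)
    · rintro χ ⟨ψ, hψ, rfl⟩ u hu
      exact hΓ ψ hψ u
  -- (2) → (3)
  · intro h F hF V w hp
    exact h F hF V w hp w (hF.refl w)
  -- (3) → (2)
  · intro h F hF V w hp u hu
    apply h F hF V u
    rintro χ ⟨ψ, hψ, rfl⟩ v hv
    exact hp (Form.box ψ) (mem_boxΓ hψ) v (hF.trans hu hv)
  -- (3) → (4)
  · intro h F hF V w hp u hu
    have hne : ({v | F.R w v} : Set F.W).Nonempty := ⟨u, hu⟩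
    have closed : ∀ ⦃a b : F.W⦄, a ∈ {v | F.R w v} → F.R a b → b ∈ {v | F.R w v} :=
      fun a b ha hab => hF.1 ha hab
    set G := F.restr {v | F.R w v} hne with hG
    have hG5 : S5 G :=
      ⟨fun a => hF.2 w a.1 a.1 a.2 a.2,
       fun {a b} _ => hF.2 w b.1 a.1 b.2 a.2,
       fun hab hbc => hF.1 hab hbc⟩
    have hconc := h G hG5 (fun n a => V n a.1) ⟨u, hu⟩ ?_
    · exact (sat_restr F _ hne closed V φ ⟨u, hu⟩).mp hconc
    · rintro χ ⟨ψ, hψ, rfl⟩ b hb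
      exact (sat_restr F _ hne closed V ψ b).mpr (hp (Form.box ψ) (mem_boxΓ hψ) b.1 b.2)
  -- (4) → (3)
  · intro h F hF V w hp
    have hK : K45 F :=
      ⟨fun a b c hab hbc => hF.trans hab hbc,
       fun x y z hxy hxz => hF.trans (hF.symm hxy) hxz⟩
    exact h F hK V w hp w (hF.refl w)
  -- (4) → (5)
  · intro h F hF V
    exact h F ⟨hF.2.1, hF.2.2⟩ V
  -- (5) → (4)
  · intro h F hF V w hp u hu
    have hne : (insert w {v | F.R w v} : Set F.W).Nonempty := ⟨w, Set.mem_insert _ _⟩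
    have closed : ∀ ⦃a b : F.W⦄, a ∈ insert w {v | F.R w v} → F.R a b →
        b ∈ insert w {v | F.R w v} := by
      rintro a b (rfl | ha) hab
      · exact Or.inr hab
      · exact Or.inr (hF.1 ha hab)
    set G := F.restr (insert w {v | F.R w v}) hne with hG
    have hGD : KD45 G := by
      refine ⟨?_, fun a b c hab hbc => hF.1 hab hbc,
        fun x y z hxy hxz => hF.2 x.1 y.1 z.1 hxy hxz⟩
      rintro ⟨a, (rfl | ha)⟩
      · exact ⟨⟨u, Or.inr hu⟩, hu⟩
      · exact ⟨⟨a, Or.inr ha⟩, hF.2 w a a ha ha⟩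
    have hconc := h G hGD (fun n a => V n a.1) ⟨w, Set.mem_insert _ _⟩ ?_
    · exact (sat_restr F _ hne closed V φ ⟨u, Or.inr hu⟩).mp (hconc ⟨u, Or.inr hu⟩ hu)
    · rintro χ ⟨ψ, hψ, rfl⟩ b hb
      exact (sat_restr F _ hne closed V ψ b).mpr (hp (Form.box ψ) (mem_boxΓ hψ) b.1 hb)
end

section
/- Let Γ be a set of modal-free (propositional) formulas and φ any modal formula. Then for any class of frames F whatsoever, Γ ⊨^g_F φ if and only if □^ωΓ ⊨_F φ. -/
lemma satFree (F : Frame) {ψ : Form} (h : modalFree ψ)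
    (V V' : ℕ → F.W → Prop) (w w' : F.W)
    (hV : ∀ n, V n w ↔ V' n w') : F.sat V w ψ ↔ F.sat V' w' ψ := by
  induction ψ with
  | var n => exact hV n
  | bot => exact Iff.rfl
  | imp a b iha ihb => exact imp_congr (iha h.1) (ihb h.2)
  | box a iha => exact absurd h (by simp [modalFree])

lemma satAgree (F : Frame) (V V' : ℕ → F.W → Prop) (φ : Form) :
    ∀ w, (∀ v, Relation.ReflTransGen F.R w v → ∀ n, (V n v ↔ V' n v)) →
    (F.sat V w φ ↔ F.sat V' w φ) := by
  induction φ with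
  | var n => exact fun w h => h w .refl n
  | bot => exact fun _ _ => Iff.rfl
  | imp a b iha ihb => exact fun w h => imp_congr (iha w h) (ihb w h)
  | box a iha =>
    intro w h
    constructor <;> intro hs u hu
    · exact (iha u (fun v hv n => h v (.head hu hv) n)).mp (hs u hu)
    · exact (iha u (fun v hv n => h v (.head hu hv) n)).mpr (hs u hu)

lemma boxReach (F : Frame) (V : ℕ → F.W → Prop) (ψ : Form) {w v : F.W}
    (hr : Relation.ReflTransGen F.R w v)
    (h : ∀ n, F.sat V w (boxIter n ψ)) : ∀ n, F.sat V v (boxIter n ψ) := by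
  induction hr with
  | refl => exact h
  | tail _ hR ih => exact fun n => ih (n + 1) _ hR

lemma boxAll (F : Frame) (V : ℕ → F.W → Prop) (ψ : Form)
    (h : ∀ w, F.sat V w ψ) : ∀ n w, F.sat V w (boxIter n ψ) := by
  intro n
  induction n with
  | zero => exact h
  | succ n ih => exact fun w u _ => ih u

/-- for modal-free premises, over any class of frames,
global consequence equals local consequence from □^ωΓ. -/
theorem stmt10 (C : Frame → Prop) (Γ : Set Form) (φ : Form)
    (hΓ : ∀ ψ ∈ Γ, modalFree ψ) :
    globalConseq C Γ φ ↔ localConseq C (boxOmega Γ) φ := by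
  constructor
  · intro h F hF V w hw
    classical
    set V' : ℕ → F.W → Prop := fun n v =>
      if Relation.ReflTransGen F.R w v then V n v else V n w with hV'
    have hagree : ∀ v, Relation.ReflTransGen F.R w v → ∀ n, V n v ↔ V' n v := by
      intro v hv n; simp [hV', hv]
    have hφ := h F hF V' ?_ w
    · exact (satAgree F V V' φ w hagree).mpr hφ
    · intro ψ hψ v
      by_cases hv : Relation.ReflTransGen F.R w v
      · have hs : F.sat V v ψ :=
          boxReach F V ψ hv (fun n => hw _ ⟨n, ψ, hψ, rfl⟩) 0
        exact (satFree F (hΓ ψ hψ) V V' v v (fun n => by simp [hV', hv])).mp hs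
      · have hwψ : F.sat V w ψ := hw ψ ⟨0, ψ, hψ, rfl⟩
        exact (satFree F (hΓ ψ hψ) V V' w v (fun n => by simp [hV', hv])).mp hwψ
  · intro h F hF V hw w
    apply h F hF V w
    rintro χ ⟨n, ψ, hψ, rfl⟩
    exact boxAll F V ψ (hw ψ hψ) n w
end

section
/- For any class of Kripke frames F: ◇φ ⊨^g_F φ holds for all formulas φ if and only if every frame (W,R) in F is globally isolated, i.e., satisfies ∀x ∃y ∀z (Ryz → z = x). -/
/-- ◇φ ⊨^g_F φ for all φ iff every frame in F is globally
isolated: ∀x ∃y ∀z (Ryz → z = x). -/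
theorem stmt12 (C : Frame → Prop) :
    (∀ φ : Form, globalConseq C {Form.dia φ} φ) ↔
      ∀ F, C F → ∀ x : F.W, ∃ y : F.W, ∀ z : F.W, F.R y z → z = x := by
  constructor
  · intro h F hF x
    by_contra hne
    push_neg at hne
    have := h (Form.var 0) F hF (fun _ v => v ≠ x)
      (by
        intro ψ hψ w
        simp only [Set.mem_singleton_iff] at hψ
        subst hψ
        intro hbox
        obtain ⟨z, hz, hzx⟩ := hne w
        exact hbox z hz hzx) x
    exact this rfl
  · intro h φ F hF V hsat w
    obtain ⟨y, hy⟩ := h F hF w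
    have hd := hsat (Form.dia φ) rfl y
    by_contra hw
    exact hd (fun u hu hsu => hw (hy u hu ▸ hsu))
end

section
/- For any class of Kripke frames F: ◇◇φ ⊨^g_F ◇φ holds for all formulas φ if and only if every frame (W,R) in F is globally transitive, i.e., satisfies ∀w ∃x ∀y ∀z (Rxy ∧ Ryz → Rwz). -/
/-- ◇◇φ ⊨^g_F ◇φ for all φ iff every frame in F is globally
transitive: ∀w ∃x ∀y ∀z (Rxy ∧ Ryz → Rwz). -/
theorem stmt13 (C : Frame → Prop) :
    (∀ φ : Form, globalConseq C {Form.dia (.dia φ)} (.dia φ)) ↔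
      ∀ F, C F → ∀ w : F.W, ∃ x : F.W, ∀ y z : F.W,
        F.R x y → F.R y z → F.R w z := by
  constructor
  · intro h F hF w
    by_contra hc
    push_neg at hc
    have key := h (.var 0) F hF (fun _ u => ¬ F.R w u) ?_ w
    · simp only [Form.dia, Form.neg, Frame.sat] at key
      exact key (fun u hu hp => hp hu)
    · intro ψ hψ v
      simp only [Set.mem_singleton_iff] at hψ
      subst hψ
      obtain ⟨y, z, hvy, hyz, hwz⟩ := hc v
      simp only [Form.dia, Form.neg, Frame.sat]
      intro hb
      exact hb y hvy (fun hd => hd z hyz hwz)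
  · intro h φ F hF V hΓ w
    obtain ⟨x, hx⟩ := h F hF w
    have hdd := hΓ _ (Set.mem_singleton _) x
    simp only [Form.dia, Form.neg, Frame.sat] at hdd ⊢
    intro hbox
    apply hdd
    intro y hxy hdy
    apply hdy
    intro z hyz hz
    exact hbox z (hx y z hxy hyz) hz
end

section
/- For any class of Kripke frames F: ◇□φ ⊨^g_F □φ holds for all formulas φ if and only if every frame (W,R) in F is globally Euclidean, i.e., satisfies ∀w ∀x ∃y ∀z (Rwx ∧ Ryz → Rzx). -/
/-- ◇□φ ⊨^g_F □φ for all φ iff every frame in F is globally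
Euclidean: ∀w ∀x ∃y ∀z (Rwx ∧ Ryz → Rzx). -/
theorem stmt14 (C : Frame → Prop) :
    (∀ φ : Form, globalConseq C {Form.dia (.box φ)} (.box φ)) ↔
      ∀ F, C F → ∀ w x : F.W, ∃ y : F.W, ∀ z : F.W,
        F.R w x → F.R y z → F.R z x := by
  constructor
  · intro h F hF w x
    by_contra hc
    push_neg at hc
    obtain ⟨z0, hwx, _, _⟩ := hc (Classical.choice F.nonempty)
    have h1 := h (.var 0) F hF (fun _ v => v ≠ x)
    have hglob : ∀ ψ ∈ ({Form.dia (.box (.var 0))} : Set Form),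
        ∀ v, F.sat (fun _ v => v ≠ x) v ψ := by
      intro ψ hψ v
      simp only [Set.mem_singleton_iff] at hψ
      subst hψ
      intro hb
      obtain ⟨z, _, hyz, hzx⟩ := hc v
      exact hb z hyz (fun t ht heq => hzx (heq ▸ ht))
    exact h1 hglob w x hwx rfl
  · intro h φ F hF V hΓ w u hwu
    obtain ⟨y, hy⟩ := h F hF w u
    by_contra hu
    exact hΓ _ (Set.mem_singleton _) y
      (fun z hyz hz => hu (hz u (hy z hwu hyz)))
end

section
/- For any class of Kripke frames F and natural numbers i, j, k, l: the global consequence ◇ⁱ□ʲφ ⊨^g_F □ᵏ◇ˡφ holds for all formulas φ if and only if every frame (W,R) in F satisfies ∀w ∀x ∃y ∀z ∃u (Rᵏwx ∧ Rⁱyz → Rˡxu ∧ Rʲzu). -/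
/-- n-fold composition of a relation (R⁰ is the identity). -/
def relIter {W : Type} (R : W → W → Prop) : ℕ → W → W → Prop
  | 0 => Eq
  | n+1 => fun a c => ∃ b, R a b ∧ relIter R n b c

lemma sat_dia (F : Frame) (V : ℕ → F.W → Prop) (w : F.W) (φ : Form) :
    F.sat V w (Form.dia φ) ↔ ∃ u, F.R w u ∧ F.sat V u φ := by
  simp only [Form.dia, Form.neg, Frame.sat]
  constructor
  · intro h
    by_contra hc
    push_neg at hc
    exact h fun u hu hs => hc u hu hs
  · rintro ⟨u, hu, hs⟩ h
    exact h u hu hs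

lemma sat_boxIter (F : Frame) (V : ℕ → F.W → Prop) (φ : Form) :
    ∀ n (w : F.W), F.sat V w (boxIter n φ) ↔
      ∀ u, relIter F.R n w u → F.sat V u φ := by
  intro n
  induction n with
  | zero =>
    intro w
    simp [boxIter, relIter]
  | succ n ih =>
    intro w
    simp only [boxIter, Frame.sat, relIter]
    constructor
    · rintro h u ⟨b, hb, hbu⟩
      exact (ih b).mp (h b hb) u hbu
    · intro h v hv
      exact (ih v).mpr fun u hu => h u ⟨v, hv, hu⟩

lemma sat_diaIter (F : Frame) (V : ℕ → F.W → Prop) (φ : Form) :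
    ∀ n (w : F.W), F.sat V w (diaIter n φ) ↔
      ∃ u, relIter F.R n w u ∧ F.sat V u φ := by
  intro n
  induction n with
  | zero =>
    intro w
    simp [diaIter, relIter]
  | succ n ih =>
    intro w
    rw [diaIter, sat_dia]
    constructor
    · rintro ⟨v, hv, hs⟩
      obtain ⟨u, hu, hsu⟩ := (ih v).mp hs
      exact ⟨u, ⟨v, hv, hu⟩, hsu⟩
    · rintro ⟨u, ⟨v, hv, hu⟩, hsu⟩
      exact ⟨v, hv, (ih v).mpr ⟨u, hu, hsu⟩⟩

/-- the general global correspondence result: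
◇ⁱ□ʲφ ⊨^g_F □ᵏ◇ˡφ for all φ iff every frame in F satisfies
∀w ∀x ∃y ∀z ∃u (Rᵏwx ∧ Rⁱyz → Rˡxu ∧ Rʲzu). -/
theorem stmt16 (C : Frame → Prop) (i j k l : ℕ) :
    (∀ φ : Form,
      globalConseq C {diaIter i (boxIter j φ)} (boxIter k (diaIter l φ))) ↔
    ∀ F, C F → ∀ w x : F.W, ∃ y : F.W, ∀ z : F.W, ∃ u : F.W,
      relIter F.R k w x ∧ relIter F.R i y z →
        relIter F.R l x u ∧ relIter F.R j z u := by
  constructor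
  · intro h F hF w x
    by_contra hc
    push_neg at hc
    set V : ℕ → F.W → Prop := fun _ u => ¬ relIter F.R l x u with hV
    have hglob := h (.var 0) F hF V ?_ w
    · obtain ⟨z0, hz0⟩ := hc w
      have hkwx : relIter F.R k w x := (hz0 x).1.1
      have := (sat_boxIter F V _ k w).mp hglob x hkwx
      obtain ⟨u, hu, hsu⟩ := (sat_diaIter F V _ l x).mp this
      exact hsu hu
    · rintro ψ hψ y
      rcases hψ with rfl
      obtain ⟨z, hz⟩ := hc y
      rw [sat_diaIter]
      refine ⟨z, (hz z).1.2, ?_⟩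
      rw [sat_boxIter]
      intro u hu hlu
      exact ((hz u).2 hlu) hu
  · intro h φ F hF V hΓ w
    rw [sat_boxIter]
    intro x hkx
    obtain ⟨y, hy⟩ := h F hF w x
    have hsaty := hΓ _ rfl y
    obtain ⟨z, hiz, hbox⟩ := (sat_diaIter F V _ i y).mp hsaty
    obtain ⟨u, hu⟩ := hy z
    obtain ⟨h1, h2⟩ := hu ⟨hkx, hiz⟩
    rw [sat_diaIter]
    exact ⟨u, h1, (sat_boxIter F V _ j z).mp hbox u h2⟩
end
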